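/- The group generated by the permutations P = (1,13,2,11,4,5,8)(3,10,6,14,7,9,12) and Q = (1,7,3,4)(2,11,13,9,6,14,10,5) is not a simple group. -/

import Mathlib

set_option maxRecDepth 100000
set_option maxHeartbeats 2000000

/-- The permutation `P = (1,13,2,11,4,5,8)(3,10,6,14,7,9,12)` on the points `1,…,14`. -/
def permP : Equiv.Perm (Fin 15) :=
  List.formPerm ([1, 13, 2, 11, 4, 5, 8] : List (Fin 15)) *
    List.formPerm ([3, 10, 6, 14, 7, 9, 12] : List (Fin 15))

/-- The permutation `Q = (1,7,3,4)(2,11,13,9,6,14,10,5)` on the points `1,…,14`. -/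
def permQ : Equiv.Perm (Fin 15) :=
  List.formPerm ([1, 7, 3, 4] : List (Fin 15)) *
    List.formPerm ([2, 11, 13, 9, 6, 14, 10, 5] : List (Fin 15))

/-- The Hurwitz group of genus 17 realized as a permutation group. -/
def hurwitzPermGroup : Subgroup (Equiv.Perm (Fin 15)) := Subgroup.closure {permP, permQ}

/-- `a = Q^4`, an element of the normal elementary abelian subgroup of order 8. -/
def pa : Equiv.Perm (Fin 15) := permQ ^ 4

/-- `b = P a P⁻¹`. -/
def pb : Equiv.Perm (Fin 15) := permP * pa * permP⁻¹

/-- `c = P b P⁻¹`. -/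
def pc : Equiv.Perm (Fin 15) := permP * pb * permP⁻¹

/-- The elementary abelian normal subgroup of order 8. -/
def V : Subgroup (Equiv.Perm (Fin 15)) := Subgroup.closure {pa, pb, pc}

lemma pa_mem_V : pa ∈ V := Subgroup.subset_closure (by simp)
lemma pb_mem_V : pb ∈ V := Subgroup.subset_closure (by simp)
lemma pc_mem_V : pc ∈ V := Subgroup.subset_closure (by simp)

/-- If `g` conjugates each generator into `K`, then `g` conjugates all of the closure into `K`. -/
lemma conj_mem_of_mem_closure {G : Type*} [Group G] (g : G) {S : Set G} {K : Subgroup G}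
    (h : ∀ s ∈ S, g * s * g⁻¹ ∈ K) {x : G} (hx : x ∈ Subgroup.closure S) :
    g * x * g⁻¹ ∈ K := by
  have hle : Subgroup.closure S ≤ K.comap (MulAut.conj g).toMonoidHom := by
    rw [Subgroup.closure_le]
    intro s hs
    simpa [Subgroup.mem_comap] using h s hs
  simpa [Subgroup.mem_comap] using hle hx

lemma mem_normalizer_of_conj {G : Type*} [Group G] (g : G) {S : Set G}
    (h1 : ∀ s ∈ S, g * s * g⁻¹ ∈ Subgroup.closure S)
    (h2 : ∀ s ∈ S, g⁻¹ * s * g ∈ Subgroup.closure S) :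
    g ∈ Subgroup.normalizer (Subgroup.closure S : Set G) := by
  rw [Subgroup.mem_normalizer_iff]
  intro x
  constructor
  · exact fun hx => conj_mem_of_mem_closure g h1 hx
  · intro hx
    have h2' : ∀ s ∈ S, g⁻¹ * s * g⁻¹⁻¹ ∈ Subgroup.closure S := by simpa using h2
    have := conj_mem_of_mem_closure g⁻¹ h2' hx
    simpa [mul_assoc] using this

lemma permP_mem_normalizer : permP ∈ Subgroup.normalizer (V : Set (Equiv.Perm (Fin 15))) := by
  apply mem_normalizer_of_conj
  · rintro s (rfl | rfl | rfl)
    · exact pb_mem_V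
    · exact pc_mem_V
    · have : permP * pc * permP⁻¹ = pa * pb := by decide
      rw [this]; exact mul_mem pa_mem_V pb_mem_V
  · rintro s (rfl | rfl | rfl)
    · have : permP⁻¹ * pa * permP = pa * pc := by decide
      rw [this]; exact mul_mem pa_mem_V pc_mem_V
    · have : permP⁻¹ * pb * permP = pa := by decide
      rw [this]; exact pa_mem_V
    · have : permP⁻¹ * pc * permP = pb := by decide
      rw [this]; exact pb_mem_V

lemma permQ_mem_normalizer : permQ ∈ Subgroup.normalizer (V : Set (Equiv.Perm (Fin 15))) := by
  apply mem_normalizer_of_conj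
  · rintro s (rfl | rfl | rfl)
    · have : permQ * pa * permQ⁻¹ = pa := by decide
      rw [this]; exact pa_mem_V
    · have : permQ * pb * permQ⁻¹ = pa * pb * pc := by decide
      rw [this]; exact mul_mem (mul_mem pa_mem_V pb_mem_V) pc_mem_V
    · have : permQ * pc * permQ⁻¹ = pa * pc := by decide
      rw [this]; exact mul_mem pa_mem_V pc_mem_V
  · rintro s (rfl | rfl | rfl)
    · have : permQ⁻¹ * pa * permQ = pa := by decide
      rw [this]; exact pa_mem_V
    · have : permQ⁻¹ * pb * permQ = pb * pc := by decide
      rw [this]; exact mul_mem pb_mem_V pc_mem_V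
    · have : permQ⁻¹ * pc * permQ = pa * pc := by decide
      rw [this]; exact mul_mem pa_mem_V pc_mem_V

lemma hurwitz_le_normalizer : hurwitzPermGroup ≤ Subgroup.normalizer (V : Set (Equiv.Perm (Fin 15))) := by
  rw [hurwitzPermGroup, Subgroup.closure_le]
  rintro x (rfl | rfl)
  · exact permP_mem_normalizer
  · exact permQ_mem_normalizer

lemma permP_mem_hurwitz : permP ∈ hurwitzPermGroup := Subgroup.subset_closure (by simp)
lemma permQ_mem_hurwitz : permQ ∈ hurwitzPermGroup := Subgroup.subset_closure (by simp)

lemma pa_mem_hurwitz : pa ∈ hurwitzPermGroup := pow_mem permQ_mem_hurwitz 4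

/-- The group generated by the permutations `P = (1,13,2,11,4,5,8)(3,10,6,14,7,9,12)` and
`Q = (1,7,3,4)(2,11,13,9,6,14,10,5)` is not simple. -/
theorem hurwitz_not_simple : ¬ IsSimpleGroup hurwitzPermGroup := by
  intro h
  set N : Subgroup hurwitzPermGroup := V.subgroupOf hurwitzPermGroup with hNdef
  have hN : N.Normal := by
    constructor
    intro n hn g
    rw [hNdef, Subgroup.mem_subgroupOf] at hn ⊢
    have hg := hurwitz_le_normalizer g.2
    rw [Subgroup.mem_normalizer_iff] at hg
    exact (hg n.1).1 hn
  rcases h.eq_bot_or_eq_top_of_normal N hN with hbot | htop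
  · have hmem : (⟨pa, pa_mem_hurwitz⟩ : hurwitzPermGroup) ∈ N := by
      rw [hNdef, Subgroup.mem_subgroupOf]; exact pa_mem_V
    rw [hbot, Subgroup.mem_bot] at hmem
    have hne : pa ≠ 1 := by decide
    rw [Subtype.ext_iff] at hmem
    exact hne hmem
  · have hmem : (⟨permP, permP_mem_hurwitz⟩ : hurwitzPermGroup) ∈ N := htop ▸ Subgroup.mem_top _
    rw [hNdef, Subgroup.mem_subgroupOf] at hmem
    -- V is contained in the centralizer of {pa}, but P does not commute with pa.
    have hVc : V ≤ Subgroup.centralizer {pa} := by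
      rw [V, Subgroup.closure_le]
      rintro x (rfl | rfl | rfl) <;>
        · rw [SetLike.mem_coe, Subgroup.mem_centralizer_iff]
          intro g hg
          rw [Set.mem_singleton_iff] at hg
          subst hg
          decide
    have hc := hVc hmem
    rw [Subgroup.mem_centralizer_iff] at hc
    have := hc pa rfl
    exact absurd this (by decide)
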